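/- Let f : ℂ → ℂ satisfy f(z + ζ) = c₁ f(z) + c₂ for all z ∈ ℂ, with ζ ≠ 0 and |f(z)| → ∞ as |z| → ∞. Then c₁ = 1, i.e. f(z + ζ) = f(z) + c₂ for all z. -/

import Mathlib

theorem stmt9 (f : ℂ → ℂ) (ζ c₁ c₂ : ℂ) (hζ : ζ ≠ 0)
    (hinf : Filter.Tendsto (fun z => ‖f z‖) (Bornology.cobounded ℂ) Filter.atTop)
    (hfe : ∀ z, f (z + ζ) = c₁ * f z + c₂) : c₁ = 1 := by
  by_contra h
  have h1 : (1 : ℂ) - c₁ ≠ 0 := sub_ne_zero.mpr (Ne.symm h)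
  set w := c₂ / (1 - c₁) with hw
  have hc2 : c₂ = w * (1 - c₁) := by rw [hw, div_mul_cancel₀ _ h1]
  have hrec : ∀ z, f (z + ζ) - w = c₁ * (f z - w) := by
    intro z; rw [hfe z, hc2]; ring
  have hiter : ∀ (n : ℕ) (z : ℂ), f (z + n * ζ) - w = c₁ ^ n * (f z - w) := by
    intro n
    induction n with
    | zero => intro z; simp
    | succ k ih =>
      intro z
      have h2 := hrec (z + k * ζ)
      rw [show z + (k + 1 : ℕ) * ζ = z + k * ζ + ζ by push_cast; ring, h2, ih z]
      ring
  -- construct a sequence going to infinity on which ‖f‖ is bounded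
  obtain ⟨a, ha1, ha2⟩ : ∃ a : ℕ → ℂ, Filter.Tendsto a Filter.atTop (Bornology.cobounded ℂ)
      ∧ ∀ n, ‖f (a n)‖ ≤ ‖f 0 - w‖ + ‖w‖ := by
    have hnorm : ∀ s : ℂ, s ≠ 0 → Filter.Tendsto (fun n : ℕ => (n : ℂ) * s) Filter.atTop
        (Bornology.cobounded ℂ) := by
      intro s hs
      rw [← tendsto_norm_atTop_iff_cobounded]
      simp only [norm_mul, Complex.norm_natCast]
      exact Filter.Tendsto.atTop_mul_const (norm_pos_iff.mpr hs) tendsto_natCast_atTop_atTop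
    rcases le_or_gt ‖c₁‖ 1 with hc | hc
    · refine ⟨fun n => (n : ℂ) * ζ, hnorm ζ hζ, fun n => ?_⟩
      have := hiter n 0
      rw [zero_add] at this
      have hb : ‖f ((n : ℂ) * ζ) - w‖ ≤ ‖f 0 - w‖ := by
        rw [this, norm_mul, norm_pow]
        calc ‖c₁‖ ^ n * ‖f 0 - w‖ ≤ 1 * ‖f 0 - w‖ := by
              exact mul_le_mul_of_nonneg_right (pow_le_one₀ (norm_nonneg _) hc) (norm_nonneg _)
          _ = ‖f 0 - w‖ := one_mul _
      calc ‖f ((n : ℂ) * ζ)‖ = ‖f ((n : ℂ) * ζ) - w + w‖ := by ring_nf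
        _ ≤ ‖f ((n : ℂ) * ζ) - w‖ + ‖w‖ := norm_add_le _ _
        _ ≤ ‖f 0 - w‖ + ‖w‖ := by linarith
    · refine ⟨fun n => (n : ℂ) * (-ζ), hnorm (-ζ) (neg_ne_zero.mpr hζ), fun n => ?_⟩
      have := hiter n ((n : ℂ) * (-ζ))
      rw [show (n : ℂ) * (-ζ) + n * ζ = 0 by ring] at this
      have hb : ‖f ((n : ℂ) * (-ζ)) - w‖ ≤ ‖f 0 - w‖ := by
        have hpow : (1 : ℝ) ≤ ‖c₁‖ ^ n := one_le_pow₀ hc.le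
        have : ‖f 0 - w‖ = ‖c₁‖ ^ n * ‖f ((n : ℂ) * (-ζ)) - w‖ := by
          rw [this, norm_mul, norm_pow]
        nlinarith [norm_nonneg (f ((n : ℂ) * (-ζ)) - w)]
      calc ‖f ((n : ℂ) * (-ζ))‖ = ‖f ((n : ℂ) * (-ζ)) - w + w‖ := by ring_nf
        _ ≤ ‖f ((n : ℂ) * (-ζ)) - w‖ + ‖w‖ := norm_add_le _ _
        _ ≤ ‖f 0 - w‖ + ‖w‖ := by linarith
  have := (hinf.comp ha1).eventually_gt_atTop (‖f 0 - w‖ + ‖w‖)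
  obtain ⟨n, hn⟩ := this.exists
  exact absurd (ha2 n) (not_le.mpr hn)
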